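/- For every nonzero rational q and every nonzero rational r, q = (r^2 q + 1/(3r))^3 - ((27 r^9 q^3 - 9 r^3 q + 1)/(3r(9 r^6 q^2 - 3 r^3 q + 1)))^3 - ((3 r^2 q (3 r^3 q - 1))/(9 r^6 q^2 - 3 r^3 q + 1))^3. In particular, every rational number is a sum of three rational cubes in infinitely many ways. -/

import Mathlib

open Polynomial

lemma key_identity (q r : ℚ) (hr : r ≠ 0) :
    q = (r^2*q + 1/(3*r))^3
        - ((27*r^9*q^3 - 9*r^3*q + 1)/(3*r*(9*r^6*q^2 - 3*r^3*q + 1)))^3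
        - ((3*r^2*q*(3*r^3*q - 1))/(9*r^6*q^2 - 3*r^3*q + 1))^3 := by
  have hD : (9*r^6*q^2 - 3*r^3*q + 1) ≠ 0 := by
    have : 0 < 9*r^6*q^2 - 3*r^3*q + 1 := by nlinarith [sq_nonneg (6*r^3*q - 1)]
    exact this.ne'
  generalize hDdef : (9*r^6*q^2 - 3*r^3*q + 1) = D at hD ⊢
  field_simp
  rw [← hDdef]
  ring

lemma root_set_finite (q c : ℚ) : {r : ℚ | 3*q*r^3 - 3*c*r + 1 = 0}.Finite := by
  have hp : (C (3*q) * X^3 - C (3*c) * X + 1 : ℚ[X]) ≠ 0 := by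
    intro h
    have := congrArg (fun p => Polynomial.coeff p 0) h
    simp [coeff_one, coeff_X, coeff_C_mul] at this
  have := Polynomial.finite_setOf_isRoot hp
  convert this using 1
  ext r
  simp [Polynomial.IsRoot, Polynomial.eval_sub, Polynomial.eval_add]

theorem stmt_2 :
    (∀ q r : ℚ, q ≠ 0 → r ≠ 0 →
      q = (r^2*q + 1/(3*r))^3
          - ((27*r^9*q^3 - 9*r^3*q + 1)/(3*r*(9*r^6*q^2 - 3*r^3*q + 1)))^3
          - ((3*r^2*q*(3*r^3*q - 1))/(9*r^6*q^2 - 3*r^3*q + 1))^3) ∧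
    (∀ q : ℚ, {t : ℚ × ℚ × ℚ | t.1^3 + t.2.1^3 + t.2.2^3 = q}.Infinite) := by
  constructor
  · intro q r _ hr
    exact key_identity q r hr
  · intro q
    by_contra hfin
    rw [Set.not_infinite] at hfin
    set S : Set (ℚ × ℚ × ℚ) := {t : ℚ × ℚ × ℚ | t.1^3 + t.2.1^3 + t.2.2^3 = q} with hS
    have hF : (Prod.fst '' S).Finite := hfin.image _
    have hsub : {r : ℚ | r ≠ 0} ⊆
        ⋃ c ∈ Prod.fst '' S, {r : ℚ | 3*q*r^3 - 3*c*r + 1 = 0} := by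
      intro r hr
      have hr' : r ≠ 0 := hr
      set c : ℚ := r^2*q + 1/(3*r) with hc
      have hmem : (c, -((27*r^9*q^3 - 9*r^3*q + 1)/(3*r*(9*r^6*q^2 - 3*r^3*q + 1))),
          -((3*r^2*q*(3*r^3*q - 1))/(9*r^6*q^2 - 3*r^3*q + 1))) ∈ S := by
        have := key_identity q r hr'
        simp only [hS, Set.mem_setOf_eq]
        rw [hc]
        linear_combination -this
      refine Set.mem_biUnion ⟨_, hmem, rfl⟩ ?_
      have h3r : (3*r : ℚ) ≠ 0 := by positivity
      simp only [Set.mem_setOf_eq, hc]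
      field_simp
      ring
    have hfin2 : ({r : ℚ | r ≠ 0}).Finite :=
      Set.Finite.subset (hF.biUnion fun c _ => root_set_finite q c) hsub
    have : ({0}ᶜ : Set ℚ).Infinite := (Set.finite_singleton 0).infinite_compl
    exact this (by simpa [Set.compl_singleton_eq] using hfin2)
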